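/- If (n,⟨,⟩,V) is of pH-type, then ⟨j(a)x, ι j(b)x⟩ = ⟨a,ιb⟩⟨x,ιx⟩ and ⟨j(a)x, ι j(a)y⟩ = ⟨a,ιa⟩⟨x,ιy⟩ for all a,b ∈ U⊕Z and x,y ∈ V⊕E. -/
import Mathlib


/-- If `(n, ⟨,⟩, V)` is of pH-type, then the polarized identities
`⟨j(a)x, ι j(b)x⟩ = ⟨a, ιb⟩ ⟨x, ιx⟩` and `⟨j(a)x, ι j(a)y⟩ = ⟨a, ιa⟩ ⟨x, ιy⟩`
hold for all `a, b ∈ U ⊕ Z` and `x, y ∈ V ⊕ E`. -/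
theorem pH_type_polarized_identities
    {n : Type*} [LieRing n] [LieAlgebra ℝ n]
    (B : LinearMap.BilinForm ℝ n) (hBsymm : ∀ x y : n, B x y = B y x)
    (U Z V E : Submodule ℝ n)
    (ι : n →ₗ[ℝ] n) (hι2 : ∀ x, ι (ι x) = x) (hιsa : ∀ x y : n, B (ι x) y = B x (ι y))
    (j : n →ₗ[ℝ] n →ₗ[ℝ] n)
    (hjmap : ∀ a ∈ U ⊔ Z, ∀ x ∈ V ⊔ E, j a x ∈ V ⊔ E)
    (hjskew : ∀ a ∈ U ⊔ Z, ∀ x ∈ V ⊔ E, ∀ y ∈ V ⊔ E,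
      B (j a x) (ι y) + B (ι x) (j a y) = 0)
    (hpH : ∀ a ∈ U ⊔ Z, ∀ x ∈ V ⊔ E, j a (j a x) = (-(B a (ι a))) • x) :
    (∀ a ∈ U ⊔ Z, ∀ b ∈ U ⊔ Z, ∀ x ∈ V ⊔ E,
        B (j a x) (ι (j b x)) = B a (ι b) * B x (ι x)) ∧
    (∀ a ∈ U ⊔ Z, ∀ x ∈ V ⊔ E, ∀ y ∈ V ⊔ E,
        B (j a x) (ι (j a y)) = B a (ι a) * B x (ι y)) := by
  -- second identity first
  have key2 : ∀ a ∈ U ⊔ Z, ∀ x ∈ V ⊔ E, ∀ y ∈ V ⊔ E,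
      B (j a x) (ι (j a y)) = B a (ι a) * B x (ι y) := by
    intro a ha x hx y hy
    have hskew := hjskew a ha x hx (j a y) (hjmap a ha y hy)
    have h1 : B (j a x) (ι (j a y)) = - B (ι x) (j a (j a y)) := by linarith
    rw [h1, hpH a ha y hy]
    simp [hιsa]
  refine ⟨?_, key2⟩
  intro a ha b hb x hx
  -- polarization in a
  have hab : a + b ∈ U ⊔ Z := add_mem ha hb
  have hpol := hpH (a + b) hab x hx
  simp only [map_add, LinearMap.add_apply] at hpol
  have hA := hpH a ha x hx
  have hB' := hpH b hb x hx
  have hBba : B b (ι a) = B a (ι b) := by rw [hBsymm b (ι a), hιsa]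
  have hsum : j a (j b x) + j b (j a x) = (-(2 * B a (ι b))) • x := by
    rw [hA, hB', hBba] at hpol
    linear_combination (norm := module) hpol
  -- symmetry: B (j b x) (ι (j a x)) = B (j a x) (ι (j b x))
  have hsymm : B (j b x) (ι (j a x)) = B (j a x) (ι (j b x)) := by
    rw [hBsymm, ← hιsa, hιsa]
  have hs1 := hjskew a ha x hx (j b x) (hjmap b hb x hx)
  have hs2 := hjskew b hb x hx (j a x) (hjmap a ha x hx)
  have hx1 : B (ι x) (j a (j b x) + j b (j a x)) = B (ι x) ((-(2 * B a (ι b))) • x) := by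
    rw [hsum]
  simp only [map_add, map_smul, smul_eq_mul] at hx1
  have hιxx : B (ι x) x = B x (ι x) := hιsa x x
  rw [hιxx] at hx1
  nlinarith [hx1, hs1, hs2, hsymm]
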